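/- Let m ≥ 2 be an integer and α ∈ (0,1) with m^α not an integer. Then there exists a finite nonzero Borel measure μ on T = {0,1,...,m-1}^ℕ such that for every x in the support of μ, x_0 ≤ Θ_{α,*}(μ,x) ≤ Θ^{α,*}(μ,x) ≤ (⌈m^α⌉/⌊m^α⌋)·x_0, where x_0 = μ(T). In particular C(μ,α) = (esssup_x Θ^{α,*}(μ,x))/(essinf_x Θ_{α,*}(μ,x)) ≤ ⌈m^α⌉/⌊m^α⌋. -/

import Mathlib

open MeasureTheory Filter Set ENNReal TopologicalSpace

open Classical in
noncomputable def Pseq (β : ℝ) (p : ℕ) : ℕ → ℕ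
  | 0 => 1
  | n+1 => if ((Pseq β p n : ℝ) * (p+1) ≤ β^(n+1)) then Pseq β p n * (p+1) else Pseq β p n * p

open Classical in
noncomputable def cseq (β : ℝ) (p : ℕ) (n : ℕ) : ℕ :=
  if ((Pseq β p n : ℝ) * (p+1) ≤ β^(n+1)) then p+1 else p

lemma Pseq_succ (β : ℝ) (p n : ℕ) : Pseq β p (n+1) = Pseq β p n * cseq β p n := by
  rw [Pseq, cseq]; split_ifs <;> rfl

lemma cseq_pos {p : ℕ} (hp : 0 < p) (β : ℝ) (n : ℕ) : 0 < cseq β p n := by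
  unfold cseq; split_ifs <;> omega

lemma cseq_le (β : ℝ) (p n : ℕ) : cseq β p n ≤ p + 1 := by
  unfold cseq; split_ifs <;> omega

lemma Pseq_pos {p : ℕ} (hp : 0 < p) (β : ℝ) : ∀ n, 0 < Pseq β p n
  | 0 => Nat.one_pos
  | n+1 => by rw [Pseq_succ]; exact Nat.mul_pos (Pseq_pos hp β n) (cseq_pos hp β n)

lemma Pseq_prod (β : ℝ) (p : ℕ) : ∀ n, Pseq β p n = ∏ i ∈ Finset.range n, cseq β p i
  | 0 => rfl
  | n+1 => by rw [Pseq_succ, Finset.prod_range_succ, Pseq_prod β p n]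

lemma Pseq_bounds {β : ℝ} {p : ℕ} (hp : 0 < p) (h1 : (p:ℝ) < β) (h2 : β < p+1) :
    ∀ n, (p:ℝ) * β^n ≤ (p+1) * Pseq β p n ∧ (Pseq β p n : ℝ) ≤ β^n := by
  have hβ0 : (0:ℝ) < β := lt_of_le_of_lt (Nat.cast_nonneg p) h1
  intro n
  induction n with
  | zero => simp [Pseq]
  | succ n ih =>
    obtain ⟨ihl, ihu⟩ := ih
    by_cases C : ((Pseq β p n : ℝ) * (p+1) ≤ β^(n+1))
    · have hP : (Pseq β p (n+1) : ℝ) = (Pseq β p n : ℝ) * (p+1) := by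
        rw [Pseq]; rw [if_pos C]; push_cast; ring
      constructor
      · rw [hP]
        have : (p:ℝ) * β^(n+1) = ((p:ℝ) * β^n) * β := by ring
        rw [this]
        calc ((p:ℝ) * β^n) * β ≤ ((p+1) * Pseq β p n) * β := by
              exact mul_le_mul_of_nonneg_right ihl hβ0.le
          _ ≤ ((p+1) * Pseq β p n) * (p+1) := by
              refine mul_le_mul_of_nonneg_left h2.le ?_
              positivity
          _ = (p+1) * ((Pseq β p n : ℝ) * (p+1)) := by ring
      · rw [hP]; exact C
    · have hP : (Pseq β p (n+1) : ℝ) = (Pseq β p n : ℝ) * p := by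
        rw [Pseq]; rw [if_neg C]; push_cast; ring
      push_neg at C
      constructor
      · rw [hP]
        calc (p:ℝ) * β^(n+1) ≤ (p:ℝ) * ((Pseq β p n : ℝ) * (p+1)) :=
              mul_le_mul_of_nonneg_left C.le (Nat.cast_nonneg p)
          _ = (p+1) * ((Pseq β p n : ℝ) * p) := by ring
      · rw [hP]
        calc (Pseq β p n : ℝ) * p ≤ β^n * β := by
              apply mul_le_mul ihu h1.le (Nat.cast_nonneg p) (by positivity)
          _ = β^(n+1) := by ring

def Aset (c : ℕ → ℕ) (n : ℕ) (w : ∀ i, ZMod (c i)) : Set (∀ i, ZMod (c i)) :=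
  {g | ∀ i < n, g i = w i}

lemma Aset_measurable (c : ℕ → ℕ) (n : ℕ) (w : ∀ i, ZMod (c i)) :
    MeasurableSet (Aset c n w) := by
  have : Aset c n w = ⋂ i, ⋂ (_ : i < n), (fun g : ∀ j, ZMod (c j) => g i) ⁻¹' {w i} := by
    ext g; simp [Aset]
  rw [this]
  exact MeasurableSet.iInter fun i => MeasurableSet.iInter fun _ =>
    (measurable_pi_apply i) (measurableSet_singleton _)

def extFn (c : ℕ → ℕ) (n : ℕ) (w : ∀ j : Fin n, ZMod (c j)) : ∀ i, ZMod (c i) :=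
  fun i => if h : i < n then w ⟨i, h⟩ else 0

lemma coset_measure (c : ℕ → ℕ) (hc : ∀ i, 0 < c i) (μ : Measure (∀ i, ZMod (c i)))
    (hinv : ∀ (a : ∀ i, ZMod (c i)) (s : Set (∀ i, ZMod (c i))), MeasurableSet s →
      μ ((fun g => a + g) ⁻¹' s) = μ s)
    (huniv : μ Set.univ = 1) (n : ℕ) (w : ∀ i, ZMod (c i)) :
    μ (Aset c n w) = ((∏ i ∈ Finset.range n, c i : ℕ) : ℝ≥0∞)⁻¹ := by
  haveI : ∀ i, NeZero (c i) := fun i => ⟨(hc i).ne'⟩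
  -- invariance: all cosets have the same measure
  have hinvA : ∀ v : ∀ i, ZMod (c i), μ (Aset c n v) = μ (Aset c n 0) := by
    intro v
    have hset : Aset c n v = (fun g => (-v) + g) ⁻¹' (Aset c n 0) := by
      ext g
      simp only [Aset, Set.mem_setOf_eq, Set.mem_preimage, Pi.add_apply, Pi.neg_apply,
        Pi.zero_apply]
      exact forall₂_congr fun i _ => by rw [neg_add_eq_zero, eq_comm]
    rw [hset, hinv (-v) _ (Aset_measurable c n 0)]
  -- partition of univ
  have hcover : (Set.univ : Set (∀ i, ZMod (c i))) =
      ⋃ v : ∀ j : Fin n, ZMod (c j), Aset c n (extFn c n v) := by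
    ext g
    simp only [Set.mem_univ, Set.mem_iUnion, true_iff]
    refine ⟨fun j => g j, fun i hi => ?_⟩
    simp [extFn, hi]
  have hdisj : Pairwise (Function.onFun Disjoint
      fun v : ∀ j : Fin n, ZMod (c j) => Aset c n (extFn c n v)) := by
    intro v v' hvv'
    rw [Function.onFun, Set.disjoint_left]
    intro g hg hg'
    apply hvv'
    funext j
    have h1 := hg j j.isLt
    have h2 := hg' j j.isLt
    rw [h1] at h2
    simpa [extFn, j.isLt] using h2
  have hsum : (1 : ℝ≥0∞) =
      (Fintype.card (∀ j : Fin n, ZMod (c j))) * μ (Aset c n 0) := by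
    rw [← huniv, hcover, measure_iUnion hdisj
      (fun v => Aset_measurable c n (extFn c n v)), tsum_fintype]
    rw [Finset.sum_congr rfl (fun v _ => hinvA (extFn c n v)), Finset.sum_const]
    simp [Finset.card_univ, nsmul_eq_mul]
  have hcard : (Fintype.card (∀ j : Fin n, ZMod (c j)) : ℝ≥0∞) =
      ((∏ i ∈ Finset.range n, c i : ℕ) : ℝ≥0∞) := by
    rw [Fintype.card_pi]
    norm_cast
    rw [← Fin.prod_univ_eq_prod_range (fun i => c i) n]
    exact Finset.prod_congr rfl fun j _ => ZMod.card (c j)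
  have hcard0 : ((∏ i ∈ Finset.range n, c i : ℕ) : ℝ≥0∞) ≠ 0 := by
    simp only [ne_eq, Nat.cast_eq_zero]
    exact (Finset.prod_pos fun i _ => hc i).ne'
  have hcardtop : ((∏ i ∈ Finset.range n, c i : ℕ) : ℝ≥0∞) ≠ ⊤ := by
    exact ENNReal.natCast_ne_top _
  rw [hinvA w]
  rw [hcard] at hsum
  rw [← one_mul (μ (Aset c n 0)), ← ENNReal.inv_mul_cancel hcard0 hcardtop, mul_assoc, ← hsum,
    mul_one]

open Classical in
noncomputable def tdist {m : ℕ} (a b : ℕ → Fin m) : ℝ :=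
  if h : ∃ n, a n ≠ b n then (m : ℝ) ^ (-(Nat.find h : ℤ)) else 0

def cyl {m : ℕ} (n : ℕ) (x : ℕ → Fin m) : Set (ℕ → Fin m) :=
  {y | ∀ i < n, y i = x i}

def msupp {m : ℕ} (μ : Measure (ℕ → Fin m)) : Set (ℕ → Fin m) :=
  {x | ∀ n : ℕ, 0 < μ (cyl n x)}

noncomputable def fdens {m : ℕ} (μ : Measure (ℕ → Fin m)) (α : ℝ) (n : ℕ)
    (x : ℕ → Fin m) : ℝ :=
  (m : ℝ) ^ (α * n) * (μ (cyl n x)).toReal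

noncomputable def thetaUpper {m : ℕ} (μ : Measure (ℕ → Fin m)) (α : ℝ)
    (x : ℕ → Fin m) : ℝ≥0∞ :=
  Filter.limsup (fun n : ℕ => ENNReal.ofReal ((m : ℝ) ^ (α * n)) * μ (cyl n x)) atTop

noncomputable def thetaLower {m : ℕ} (μ : Measure (ℕ → Fin m)) (α : ℝ)
    (x : ℕ → Fin m) : ℝ≥0∞ :=
  Filter.liminf (fun n : ℕ => ENNReal.ofReal ((m : ℝ) ^ (α * n)) * μ (cyl n x)) atTop

def IsUniform {m : ℕ} (μ : Measure (ℕ → Fin m)) : Prop :=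
  ∀ x ∈ msupp μ, ∀ y ∈ msupp μ, ∀ r : ℝ, 0 < r →
    μ {z | tdist x z ≤ r} = μ {z | tdist y z ≤ r}

lemma cyl_measurable {m : ℕ} (n : ℕ) (x : ℕ → Fin m) : MeasurableSet (cyl n x) := by
  have : cyl n x = ⋂ i, ⋂ (_ : i < n), (fun y : ℕ → Fin m => y i) ⁻¹' {x i} := by
    ext y; simp [cyl]
  rw [this]
  exact MeasurableSet.iInter fun i => MeasurableSet.iInter fun _ =>
    (measurable_pi_apply i) (measurableSet_singleton _)

set_option maxHeartbeats 1000000 in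
theorem marstrand_upper_bound (m : ℕ) (hm : 2 ≤ m) (α : ℝ)
    (hα : α ∈ Set.Ioo (0 : ℝ) 1) (hnotint : ∀ k : ℤ, (m : ℝ) ^ α ≠ k) :
    ∃ μ : Measure (ℕ → Fin m), IsFiniteMeasure μ ∧ μ ≠ 0 ∧
      (∀ x ∈ msupp μ,
        μ Set.univ ≤ thetaLower μ α x ∧
        thetaLower μ α x ≤ thetaUpper μ α x ∧
        thetaUpper μ α x ≤
          ENNReal.ofReal ((⌈(m : ℝ) ^ α⌉₊ : ℝ) / (⌊(m : ℝ) ^ α⌋₊ : ℝ)) *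
            μ Set.univ) ∧
      essSup (thetaUpper μ α) μ / essInf (thetaLower μ α) μ ≤
        ENNReal.ofReal ((⌈(m : ℝ) ^ α⌉₊ : ℝ) / (⌊(m : ℝ) ^ α⌋₊ : ℝ)) := by
  -- basic facts about β = m^α
  set β := (m : ℝ) ^ α with hβdef
  have hm1 : (1:ℝ) < m := by exact_mod_cast Nat.lt_of_lt_of_le Nat.one_lt_two hm
  have hβ1 : 1 < β := by
    rw [hβdef, show (1:ℝ) = (m:ℝ) ^ (0:ℝ) from (Real.rpow_zero _).symm]
    exact Real.rpow_lt_rpow_of_exponent_lt hm1 hα.1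
  have hβ0 : (0:ℝ) < β := lt_trans one_pos hβ1
  have hβm : β < m := by
    calc β < (m:ℝ) ^ (1:ℝ) := Real.rpow_lt_rpow_of_exponent_lt hm1 hα.2
      _ = m := Real.rpow_one _
  set p := ⌊β⌋₊ with hpdef
  have hp1 : 1 ≤ p := Nat.le_floor (by exact_mod_cast hβ1.le)
  have hp0 : 0 < p := hp1
  have hpR : (0:ℝ) < p := by exact_mod_cast hp0
  have hpβ : (p:ℝ) < β := by
    refine lt_of_le_of_ne (Nat.floor_le hβ0.le) fun h => hnotint p ?_
    rw [← h]; push_cast; rfl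
  have hβp1 : β < p + 1 := by exact_mod_cast Nat.lt_floor_add_one β
  have hq : ⌈β⌉₊ = p + 1 := by
    refine le_antisymm (Nat.ceil_le.mpr ?_) (Nat.lt_ceil.mpr hpβ)
    push_cast; exact hβp1.le
  have hqm : p + 1 ≤ m := by rw [← hq]; exact Nat.ceil_le.mpr hβm.le
  -- the branching sequence
  set c := cseq β p with hcdef
  have hc : ∀ i, 0 < c i := fun i => cseq_pos hp0 β i
  have hcm : ∀ i, c i ≤ m := fun i => le_trans (cseq_le β p i) hqm
  have hPb := Pseq_bounds hp0 hpβ hβp1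
  have hPpos : ∀ n, 0 < Pseq β p n := Pseq_pos hp0 β
  have hPn0 : ∀ n, ((Pseq β p n : ℕ) : ℝ≥0∞) ≠ 0 := fun n => by
    simp only [ne_eq, Nat.cast_eq_zero]; exact (hPpos n).ne'
  have hPntop : ∀ n, ((Pseq β p n : ℕ) : ℝ≥0∞) ≠ ⊤ := fun n => ENNReal.natCast_ne_top _
  -- the group and its Haar measure
  haveI : ∀ i, NeZero (c i) := fun i => ⟨(hc i).ne'⟩
  haveI : ∀ i, IsTopologicalAddGroup (ZMod (c i)) := fun i =>
    { continuous_add := continuous_of_discreteTopology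
      continuous_neg := continuous_of_discreteTopology }
  haveI : MeasurableAdd (∀ i, ZMod (c i)) :=
    { measurable_const_add := fun a => measurable_pi_lambda _ fun i =>
        measurable_from_top.comp (measurable_pi_apply i)
      measurable_add_const := fun a => measurable_pi_lambda _ fun i =>
        Measurable.comp (measurable_from_top (f := fun z : ZMod (c i) => z + a i))
          (measurable_pi_apply i) }
  set ν : Measure (∀ i, ZMod (c i)) :=
    Measure.addHaarMeasure (⊤ : PositiveCompacts (∀ i, ZMod (c i))) with hνdef
  have hνuniv : ν Set.univ = 1 := by
    have := Measure.addHaarMeasure_self (K₀ := (⊤ : PositiveCompacts (∀ i, ZMod (c i))))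
    rwa [PositiveCompacts.coe_top] at this
  have hνinv : ∀ (a : ∀ i, ZMod (c i)) (s : Set (∀ i, ZMod (c i))), MeasurableSet s →
      ν ((fun g => a + g) ⁻¹' s) = ν s := fun a s _ => measure_preimage_add ν a s
  -- the coding map
  set h : (∀ i, ZMod (c i)) → (ℕ → Fin m) :=
    fun g i => ⟨(g i).val, lt_of_lt_of_le (ZMod.val_lt (g i)) (hcm i)⟩ with hhdef
  have hmeas : Measurable h := measurable_pi_lambda _ fun i =>
    Measurable.comp
      (measurable_from_top
        (f := fun z : ZMod (c i) => (⟨z.val, lt_of_lt_of_le (ZMod.val_lt z) (hcm i)⟩ : Fin m)))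
      (measurable_pi_apply i)
  set μ : Measure (ℕ → Fin m) := Measure.map h ν with hμdef
  have huniv : μ Set.univ = 1 := by
    rw [hμdef, Measure.map_apply hmeas MeasurableSet.univ, Set.preimage_univ, hνuniv]
  -- measure of cylinders
  have key : ∀ (n : ℕ) (x : ℕ → Fin m), (∀ i < n, (x i : ℕ) < c i) →
      μ (cyl n x) = ((Pseq β p n : ℕ) : ℝ≥0∞)⁻¹ := by
    intro n x hx
    rw [hμdef, Measure.map_apply hmeas (cyl_measurable n x)]
    have hpre : h ⁻¹' cyl n x = Aset c n (fun i => ((x i : ℕ) : ZMod (c i))) := by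
      ext g
      simp only [Set.mem_preimage, cyl, Set.mem_setOf_eq, Aset]
      refine forall₂_congr fun i hi => ?_
      constructor
      · intro hgi
        have hv : (g i).val = (x i : ℕ) := congrArg Fin.val hgi
        apply ZMod.val_injective
        rw [hv, ZMod.val_cast_of_lt (hx i hi)]
      · intro hgi
        apply Fin.ext
        show (g i).val = (x i : ℕ)
        rw [hgi, ZMod.val_cast_of_lt (hx i hi)]
    rw [hpre, coset_measure c hc ν hνinv hνuniv n _, Pseq_prod]
  have key0 : ∀ (n : ℕ) (x : ℕ → Fin m), (¬ ∀ i < n, (x i : ℕ) < c i) →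
      μ (cyl n x) = 0 := by
    intro n x hx
    rw [hμdef, Measure.map_apply hmeas (cyl_measurable n x)]
    push_neg at hx
    obtain ⟨i, hi, hxi⟩ := hx
    have hpre : h ⁻¹' cyl n x = ∅ := by
      ext g
      simp only [Set.mem_preimage, cyl, Set.mem_setOf_eq, Set.mem_empty_iff_false, iff_false]
      intro hg
      have hv : (g i).val = (x i : ℕ) := congrArg Fin.val (hg i hi)
      exact absurd (ZMod.val_lt (g i)) (by rw [hv]; omega)
    rw [hpre, measure_empty]
  -- rewriting the power
  have hrw : ∀ n : ℕ, (m:ℝ) ^ (α * (n:ℝ)) = β ^ n := fun n => by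
    rw [Real.rpow_mul (by positivity), Real.rpow_natCast]
  -- pointwise bounds on the density ratios for points in the support
  have hsupp_lt : ∀ x ∈ msupp μ, ∀ i, (x i : ℕ) < c i := by
    intro x hx i
    by_contra hcon
    have := key0 (i+1) x (by push_neg; exact ⟨i, lt_add_one i, le_of_not_gt hcon⟩)
    exact absurd this (hx (i+1)).ne'
  have hcylval : ∀ x ∈ msupp μ, ∀ n, μ (cyl n x) = ((Pseq β p n : ℕ) : ℝ≥0∞)⁻¹ :=
    fun x hx n => key n x fun i _ => hsupp_lt x hx i
  have termlow : ∀ x ∈ msupp μ, ∀ n : ℕ,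
      1 ≤ ENNReal.ofReal ((m : ℝ) ^ (α * n)) * μ (cyl n x) := by
    intro x hx n
    rw [hcylval x hx n, hrw n]
    have h1 : ((Pseq β p n : ℕ) : ℝ≥0∞) ≤ ENNReal.ofReal (β ^ n) := by
      rw [← ENNReal.ofReal_natCast]
      exact ENNReal.ofReal_le_ofReal (hPb n).2
    calc (1:ℝ≥0∞) = ((Pseq β p n : ℕ) : ℝ≥0∞) * ((Pseq β p n : ℕ) : ℝ≥0∞)⁻¹ :=
          (ENNReal.mul_inv_cancel (hPn0 n) (hPntop n)).symm
      _ ≤ ENNReal.ofReal (β ^ n) * ((Pseq β p n : ℕ) : ℝ≥0∞)⁻¹ :=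
          mul_le_mul_left h1 _
  have termhigh : ∀ x ∈ msupp μ, ∀ n : ℕ,
      ENNReal.ofReal ((m : ℝ) ^ (α * n)) * μ (cyl n x) ≤
        ENNReal.ofReal (((p:ℝ) + 1) / p) := by
    intro x hx n
    rw [hcylval x hx n, hrw n]
    have hreal : β ^ n ≤ (((p:ℝ) + 1) / p) * (Pseq β p n : ℕ) := by
      rw [div_mul_eq_mul_div, le_div_iff₀ hpR]
      calc β ^ n * p = (p:ℝ) * β ^ n := by ring
        _ ≤ ((p:ℝ) + 1) * (Pseq β p n : ℕ) := by
            have := (hPb n).1; push_cast at this ⊢; linarith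
    calc ENNReal.ofReal (β ^ n) * ((Pseq β p n : ℕ) : ℝ≥0∞)⁻¹
        ≤ ENNReal.ofReal ((((p:ℝ) + 1) / p) * (Pseq β p n : ℕ)) *
            ((Pseq β p n : ℕ) : ℝ≥0∞)⁻¹ := mul_le_mul_left (ENNReal.ofReal_le_ofReal hreal) _
      _ = ENNReal.ofReal (((p:ℝ) + 1) / p) * (((Pseq β p n : ℕ) : ℝ≥0∞) *
            ((Pseq β p n : ℕ) : ℝ≥0∞)⁻¹) := by
          rw [ENNReal.ofReal_mul (by positivity), ENNReal.ofReal_natCast, mul_assoc]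
      _ = ENNReal.ofReal (((p:ℝ) + 1) / p) := by
          rw [ENNReal.mul_inv_cancel (hPn0 n) (hPntop n), mul_one]
  -- the constant
  have hconst : ENNReal.ofReal ((⌈β⌉₊ : ℝ) / (⌊β⌋₊ : ℝ)) = ENNReal.ofReal (((p:ℝ) + 1) / p) := by
    rw [hq, ← hpdef]; push_cast; rfl
  -- per-point conclusions
  have hpoint : ∀ x ∈ msupp μ,
      μ Set.univ ≤ thetaLower μ α x ∧ thetaLower μ α x ≤ thetaUpper μ α x ∧
      thetaUpper μ α x ≤ ENNReal.ofReal ((⌈β⌉₊ : ℝ) / (⌊β⌋₊ : ℝ)) * μ Set.univ := by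
    intro x hx
    refine ⟨?_, ?_, ?_⟩
    · rw [huniv]
      exact Filter.le_liminf_of_le (by isBoundedDefault)
        (Filter.Eventually.of_forall (termlow x hx))
    · exact Filter.liminf_le_limsup
    · rw [huniv, mul_one, hconst]
      exact Filter.limsup_le_of_le (by isBoundedDefault)
        (Filter.Eventually.of_forall (termhigh x hx))
  -- a.e. membership in the support
  have haes : ∀ᵐ x ∂μ, x ∈ msupp μ := by
    have hae2 : ∀ᵐ x ∂μ, ∀ i, (x i : ℕ) < c i := by
      rw [ae_all_iff]
      intro i
      show μ {x | ¬ (x i : ℕ) < c i} = 0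
      have hms : MeasurableSet {x : ℕ → Fin m | ¬ (x i : ℕ) < c i} := by
        have : {x : ℕ → Fin m | ¬ (x i : ℕ) < c i} =
            (fun x : ℕ → Fin m => x i) ⁻¹' {v : Fin m | ¬ (v : ℕ) < c i} := rfl
        rw [this]
        exact (measurable_pi_apply i) (MeasurableSet.of_discrete (s := _))
      rw [hμdef, Measure.map_apply hmeas hms]
      have : h ⁻¹' {x : ℕ → Fin m | ¬ (x i : ℕ) < c i} = ∅ := by
        ext g
        simp only [Set.mem_preimage, Set.mem_setOf_eq, Set.mem_empty_iff_false, iff_false,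
          not_not]
        exact ZMod.val_lt (g i)
      rw [this, measure_empty]
    filter_upwards [hae2] with x hx
    intro n
    rw [key n x fun i _ => hx i]
    exact ENNReal.inv_pos.mpr (hPntop n)
  -- assemble
  refine ⟨μ, ⟨by rw [huniv]; exact one_lt_top⟩, ?_, hpoint, ?_⟩
  · intro h0
    rw [h0] at huniv
    simp at huniv
  · have hS : essSup (thetaUpper μ α) μ ≤ ENNReal.ofReal ((⌈β⌉₊ : ℝ) / (⌊β⌋₊ : ℝ)) := by
      refine essSup_le_of_ae_le _ ?_
      filter_upwards [haes] with x hx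
      have := (hpoint x hx).2.2
      rwa [huniv, mul_one] at this
    have hI : (1:ℝ≥0∞) ≤ essInf (thetaLower μ α) μ := by
      refine le_essInf_of_ae_le _ ?_
      filter_upwards [haes] with x hx
      have := (hpoint x hx).1
      rwa [huniv] at this
    calc essSup (thetaUpper μ α) μ / essInf (thetaLower μ α) μ ≤
        ENNReal.ofReal ((⌈β⌉₊ : ℝ) / (⌊β⌋₊ : ℝ)) / 1 := ENNReal.div_le_div hS hI
      _ = _ := by rw [div_one]
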